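/- Assume all agents have additive cost functions and let α ≥ 1, n ≥ 2. Every α-EF1 allocation is ((nα+n−1)/(n−1+α))-MMS. Moreover this bound is tight: for every n ≥ 2 and α ≥ 1 there exists an n-agent instance with additive cost functions, an α-EF1 allocation A, and an agent i with c_i(A_i) = ((nα+n−1)/(n−1+α))·MMS_i(n,E). -/

import Mathlib

open Finset

/-- `T` is a `k`-partition of the bundle `S`: pairwise disjoint bundles whose union is `S`. -/
def IsPartitionOf {E : Type*} [DecidableEq E] {k : ℕ} (T : Fin k → Finset E) (S : Finset E) :
    Prop :=
  (∀ i j : Fin k, i ≠ j → Disjoint (T i) (T j)) ∧ Finset.univ.biUnion T = S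

/-- The maximin share of cost function `c` on `S` among `k` agents:
the minimum over `k`-partitions of `S` of the maximum cost of a bundle. -/
noncomputable def MMS {E : Type*} [DecidableEq E] (c : Finset E → ℝ) (k : ℕ) (S : Finset E) :
    ℝ :=
  sInf { m : ℝ | ∃ T : Fin k → Finset E, IsPartitionOf T S ∧ m = ⨆ j : Fin k, c (T j) }

/-- `c` is a nonnegative additive cost function. -/
def AdditiveCost {E : Type*} [DecidableEq E] (c : Finset E → ℝ) : Prop :=
  (∀ S : Finset E, 0 ≤ c S) ∧ ∀ S : Finset E, c S = ∑ e ∈ S, c {e}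

/-- `c` is a nonnegative monotone cost function with `c ∅ = 0`. -/
def MonotoneCost {E : Type*} (c : Finset E → ℝ) : Prop :=
  (∀ S : Finset E, 0 ≤ c S) ∧ c ∅ = 0 ∧ ∀ ⦃S T : Finset E⦄, S ⊆ T → c S ≤ c T

/-- `c` is subadditive. -/
def SubadditiveCost {E : Type*} [DecidableEq E] (c : Finset E → ℝ) : Prop :=
  ∀ S T : Finset E, c (S ∪ T) ≤ c S + c T

/-- `c` is submodular. -/
def SubmodularCost {E : Type*} [DecidableEq E] (c : Finset E → ℝ) : Prop :=
  ∀ S T : Finset E, c (S ∪ T) + c (S ∩ T) ≤ c S + c T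

/-- `A` is an allocation of all chores among the `n` agents. -/
def IsAllocation {E : Type*} [DecidableEq E] [Fintype E] {n : ℕ} (A : Fin n → Finset E) : Prop :=
  IsPartitionOf A Finset.univ

/-- `A` is `α`-envy-free. -/
def IsEF {E : Type*} {n : ℕ} (α : ℝ) (c : Fin n → Finset E → ℝ) (A : Fin n → Finset E) : Prop :=
  ∀ i j, c i (A i) ≤ α * c i (A j)

/-- `A` is `α`-envy-free up to one item. -/
def IsEF1 {E : Type*} [DecidableEq E] {n : ℕ} (α : ℝ) (c : Fin n → Finset E → ℝ)
    (A : Fin n → Finset E) : Prop :=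
  ∀ i j, i ≠ j → A i = ∅ ∨ ∃ e ∈ A i, c i (A i \ {e}) ≤ α * c i (A j)

/-- `A` is `α`-envy-free up to any (positive-cost) item. -/
def IsEFX {E : Type*} [DecidableEq E] {n : ℕ} (α : ℝ) (c : Fin n → Finset E → ℝ)
    (A : Fin n → Finset E) : Prop :=
  ∀ i j, i ≠ j → ∀ e ∈ A i, 0 < c i {e} → c i (A i \ {e}) ≤ α * c i (A j)

/-- `A` is an `α`-MMS allocation. -/
def IsMMSFair {E : Type*} [DecidableEq E] [Fintype E] {n : ℕ} (α : ℝ)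
    (c : Fin n → Finset E → ℝ) (A : Fin n → Finset E) : Prop :=
  ∀ i, c i (A i) ≤ α * MMS (c i) n Finset.univ

/-- `A` is an `α`-PMMS allocation. -/
def IsPMMS {E : Type*} [DecidableEq E] {n : ℕ} (α : ℝ)
    (c : Fin n → Finset E → ℝ) (A : Fin n → Finset E) : Prop :=
  ∀ i j, i ≠ j → c i (A i) ≤ α * MMS (c i) 2 (A i ∪ A j)

/-- The optimal (minimum) social cost over all allocations. -/
noncomputable def OPT {E : Type*} [DecidableEq E] [Fintype E] {n : ℕ}
    (c : Fin n → Finset E → ℝ) : ℝ :=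
  sInf { s : ℝ | ∃ A : Fin n → Finset E, IsAllocation A ∧ s = ∑ i, c i (A i) }

lemma additive_sum_partition {E : Type*} [DecidableEq E] {c : Finset E → ℝ}
    (hc : AdditiveCost c) {k : ℕ} {T : Fin k → Finset E} {S : Finset E}
    (hT : IsPartitionOf T S) : ∑ j, c (T j) = c S := by
  rw [hc.2 S, ← hT.2, Finset.sum_biUnion]
  · exact Finset.sum_congr rfl fun j _ => hc.2 (T j)
  · intro a _ b _ hab
    exact hT.1 a b hab

lemma trivial_partition {E : Type*} [DecidableEq E] {k : ℕ} (hk : 0 < k) (S : Finset E) :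
    IsPartitionOf (fun j : Fin k => if j = ⟨0, hk⟩ then S else ∅) S := by
  constructor
  · intro i j hij
    by_cases hi : i = ⟨0, hk⟩ <;> by_cases hj : j = ⟨0, hk⟩ <;> simp [hi, hj]
    exact absurd (hi.trans hj.symm) hij
  · ext e
    simp only [Finset.mem_biUnion, Finset.mem_univ, true_and]
    constructor
    · rintro ⟨j, hj⟩
      split at hj
      · exact hj
      · simp at hj
    · intro he
      exact ⟨⟨0, hk⟩, by simpa using he⟩

lemma le_MMS_of_forall_partition {E : Type*} [DecidableEq E] {c : Finset E → ℝ} {k : ℕ}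
    (hk : 0 < k) {S : Finset E} {b : ℝ}
    (h : ∀ T : Fin k → Finset E, IsPartitionOf T S → b ≤ ⨆ j, c (T j)) :
    b ≤ MMS c k S := by
  apply le_csInf
  · exact ⟨_, ⟨fun j : Fin k => if j = ⟨0, hk⟩ then S else ∅,
      trivial_partition hk S, rfl⟩⟩
  · rintro m ⟨T, hT, rfl⟩
    exact h T hT

lemma MMS_le_of_partition {E : Type*} [DecidableEq E] {c : Finset E → ℝ}
    (hc0 : ∀ S, 0 ≤ c S) {k : ℕ} (hk : 0 < k) {S : Finset E} {T : Fin k → Finset E}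
    (hT : IsPartitionOf T S) : MMS c k S ≤ ⨆ j, c (T j) := by
  apply csInf_le
  · refine ⟨0, ?_⟩
    rintro m ⟨T', hT', rfl⟩
    exact le_trans (hc0 (T' ⟨0, hk⟩))
      (le_ciSup (f := fun j => c (T' j)) (Set.Finite.bddAbove (Set.finite_range _))
        (⟨0, hk⟩ : Fin k))
  · exact ⟨T, hT, rfl⟩

lemma avg_le_MMS {E : Type*} [DecidableEq E] {c : Finset E → ℝ}
    (hc : AdditiveCost c) {k : ℕ} (hk : 0 < k) (S : Finset E) :
    c S / k ≤ MMS c k S := by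
  apply le_MMS_of_forall_partition hk
  intro T hT
  rw [div_le_iff₀ (by exact_mod_cast hk)]
  have hsum : ∑ j, c (T j) = c S := additive_sum_partition hc hT
  have hb : BddAbove (Set.range fun j => c (T j)) := Set.Finite.bddAbove (Set.finite_range _)
  have hle : ∑ j : Fin k, c (T j) ≤ (Finset.univ : Finset (Fin k)).card • (⨆ j, c (T j)) :=
    Finset.sum_le_card_nsmul _ _ _ fun x _ => le_ciSup hb x
  rw [Finset.card_univ, Fintype.card_fin, nsmul_eq_mul] at hle
  calc c S = ∑ j, c (T j) := hsum.symm
    _ ≤ (k : ℝ) * (⨆ j, c (T j)) := hle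
    _ = (⨆ j, c (T j)) * k := by ring

lemma single_le_MMS {E : Type*} [DecidableEq E] {c : Finset E → ℝ}
    (hc : AdditiveCost c) {k : ℕ} (hk : 0 < k) {S : Finset E} {e : E} (he : e ∈ S) :
    c {e} ≤ MMS c k S := by
  apply le_MMS_of_forall_partition hk
  intro T hT
  have hmem : e ∈ Finset.univ.biUnion T := hT.2.symm ▸ he
  rw [Finset.mem_biUnion] at hmem
  obtain ⟨j, -, hj⟩ := hmem
  have h1 : c {e} ≤ c (T j) := by
    rw [hc.2 (T j)]
    exact Finset.single_le_sum (f := fun x => c {x}) (fun x _ => hc.1 {x}) hj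
  exact h1.trans (le_ciSup (f := fun j => c (T j))
    (Set.Finite.bddAbove (Set.finite_range _)) j)

lemma isAllocation_fiber {E : Type*} [DecidableEq E] [Fintype E] {n : ℕ} (f : E → Fin n) :
    IsAllocation (fun i => Finset.univ.filter (fun e => f e = i)) := by
  constructor
  · intro i j hij
    rw [Finset.disjoint_left]
    intro a ha hb
    rw [Finset.mem_filter] at ha hb
    exact hij (ha.2.symm.trans hb.2)
  · ext e
    simp only [Finset.mem_biUnion, Finset.mem_univ, true_and, Finset.mem_filter, iff_true]
    exact ⟨f e, rfl⟩

set_option maxHeartbeats 3200000 in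
/-- Proposition 4.6: with additive cost functions, every `α`-EF1 allocation is
`(nα+n-1)/(n-1+α)`-MMS, and this bound is tight. -/
theorem alphaEF1_is_MMS_and_tight :
    (∀ (E : Type) [DecidableEq E] [Fintype E] (n : ℕ), 2 ≤ n → ∀ α : ℝ, 1 ≤ α →
      ∀ c : Fin n → Finset E → ℝ, (∀ i, AdditiveCost (c i)) →
      ∀ A : Fin n → Finset E, IsAllocation A → IsEF1 α c A →
        IsMMSFair (((n : ℝ) * α + (n : ℝ) - 1) / ((n : ℝ) - 1 + α)) c A) ∧
    (∀ n : ℕ, 2 ≤ n → ∀ α : ℝ, 1 ≤ α →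
      ∃ (m : ℕ) (c : Fin n → Finset (Fin m) → ℝ) (A : Fin n → Finset (Fin m)),
        (∀ i, AdditiveCost (c i)) ∧ IsAllocation A ∧ IsEF1 α c A ∧
        ∃ i, c i (A i) =
          (((n : ℝ) * α + (n : ℝ) - 1) / ((n : ℝ) - 1 + α)) * MMS (c i) n Finset.univ) := by
  constructor
  · intro E _ _ n hn α hα c hc A hA hEF1 i
    have hnR : (2:ℝ) ≤ (n:ℝ) := by exact_mod_cast hn
    have hdpos : (0:ℝ) < (n:ℝ) - 1 + α := by linarith
    have hnpos : 0 < n := by omega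
    have hM0 : 0 ≤ MMS (c i) n Finset.univ := by
      apply le_MMS_of_forall_partition hnpos
      intro T hT
      exact le_trans ((hc i).1 (T ⟨0, hnpos⟩))
        (le_ciSup (f := fun j => c i (T j)) (Set.Finite.bddAbove (Set.finite_range _))
          (⟨0, hnpos⟩ : Fin n))
    have hCn : c i Finset.univ ≤ (n:ℝ) * MMS (c i) n Finset.univ := by
      have h := avg_le_MMS (hc i) hnpos (Finset.univ : Finset E)
      rw [div_le_iff₀ (by exact_mod_cast hnpos)] at h
      linarith
    by_cases hAi : A i = ∅
    · have hc0 : c i (A i) = 0 := by rw [hAi, (hc i).2]; simp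
      rw [hc0]
      exact mul_nonneg (div_nonneg (by nlinarith) hdpos.le) hM0
    · obtain ⟨em, hem, hmax⟩ :=
        Finset.exists_max_image (A i) (fun e => c i {e}) (Finset.nonempty_iff_ne_empty.mpr hAi)
      have hmM : c i {em} ≤ MMS (c i) n Finset.univ :=
        single_le_MMS (hc i) hnpos (Finset.mem_univ em)
      have key : ∀ j ∈ Finset.univ.erase i, c i (A i) - c i {em} ≤ α * c i (A j) := by
        intro j hj
        rcases hEF1 i j (Ne.symm (Finset.mem_erase.mp hj).1) with h0 | ⟨e, he, hee⟩
        · exact absurd h0 hAi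
        · have hdiff : c i (A i \ {e}) = c i (A i) - c i {e} := by
            rw [(hc i).2 (A i \ {e}), (hc i).2 (A i),
              Finset.sum_sdiff_eq_sub (Finset.singleton_subset_iff.mpr he),
              Finset.sum_singleton]
          have hme := hmax e he
          rw [hdiff] at hee
          linarith
      have h1 := Finset.sum_le_sum key
      rw [Finset.sum_const, Finset.card_erase_of_mem (Finset.mem_univ i),
        Finset.card_univ, Fintype.card_fin, ← Finset.mul_sum, nsmul_eq_mul,
        Nat.cast_sub (by omega : 1 ≤ n), Nat.cast_one] at h1
      have hsume : ∑ j ∈ Finset.univ.erase i, c i (A j)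
          = c i Finset.univ - c i (A i) := by
        have h2 := Finset.add_sum_erase Finset.univ (fun j => c i (A j)) (Finset.mem_univ i)
        have h3 := additive_sum_partition (hc i) hA
        linarith
      rw [hsume] at h1
      rw [div_mul_eq_mul_div, le_div_iff₀ hdpos]
      nlinarith [mul_le_mul_of_nonneg_left hCn (by linarith : (0:ℝ) ≤ α),
        mul_le_mul_of_nonneg_left hmM (by linarith : (0:ℝ) ≤ (n:ℝ) - 1)]
  · intro n hn α hα
    have hnR : (2:ℝ) ≤ (n:ℝ) := by exact_mod_cast hn
    have hd : (0:ℝ) < (n:ℝ) - 1 + α := by linarith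
    have hn1 : (0:ℝ) < (n:ℝ) - 1 := by linarith
    set s : ℝ := ((n:ℝ) - 1) / ((n:ℝ) - 1 + α) with hs
    set t : ℝ := α * s / ((n:ℝ) - 1) with ht
    have hs0 : 0 ≤ s := div_nonneg (by linarith) hd.le
    have ht0 : 0 ≤ t := div_nonneg (mul_nonneg (by linarith) hs0) hn1.le
    have hst : s + t = 1 := by
      rw [ht, hs]; field_simp
    have hnt : ((n:ℝ) - 1) * t = α * s := by
      rw [ht]; field_simp
    set w : Fin (2*n-1) → ℝ :=
      fun e => if (e:ℕ) = 0 then 1 else if (e:ℕ) < n then s else t with hw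
    have hw0 : ∀ e, 0 ≤ w e := by
      intro e; rw [hw]; dsimp only; split_ifs
      · norm_num
      · exact hs0
      · exact ht0
    set c : Fin n → Finset (Fin (2*n-1)) → ℝ := fun _ S => ∑ e ∈ S, w e with hc
    have hadd : ∀ i, AdditiveCost (c i) := by
      intro i
      constructor
      · intro S; exact Finset.sum_nonneg fun e _ => hw0 e
      · intro S
        exact Finset.sum_congr rfl fun e _ => (Finset.sum_singleton _ _).symm
    set f : Fin (2*n-1) → Fin n :=
      fun e => if h : (e:ℕ) < n then ⟨(e:ℕ), h⟩ else ⟨0, by omega⟩ with hf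
    set A : Fin n → Finset (Fin (2*n-1)) :=
      fun i => Finset.univ.filter (fun e => f e = i) with hA
    have halloc : IsAllocation A := isAllocation_fiber f
    set zero : Fin n := ⟨0, by omega⟩ with hzero
    -- bundles of nonzero agents
    have hAj : ∀ j : Fin n, (j:ℕ) ≠ 0 →
        A j = {(⟨(j:ℕ), by omega⟩ : Fin (2*n-1))} := by
      intro j hj
      have hjlt := j.isLt
      ext e
      have helt := e.isLt
      simp only [hA, hf, Finset.mem_filter, Finset.mem_univ, true_and,
        Finset.mem_singleton]
      split_ifs with h1 <;> rw [Fin.ext_iff, Fin.ext_iff] <;> simp <;> omega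
    -- bundle of agent zero
    set emb : Fin (n-1) ↪ Fin (2*n-1) :=
      ⟨fun k => ⟨n + (k:ℕ), by have := k.isLt; omega⟩, @id (Function.Injective _) <| by
        intro a b hab
        have := congrArg Fin.val hab
        simp only [Fin.val_mk] at this
        exact Fin.ext (by omega)⟩ with hemb
    set bigset : Finset (Fin (2*n-1)) :=
      insert (⟨0, by omega⟩ : Fin (2*n-1)) ((Finset.univ : Finset (Fin (n-1))).map emb)
      with hbigset
    have hfe : ∀ e : Fin (2*n-1), f e = zero ↔ ((e:ℕ) = 0 ∨ n ≤ (e:ℕ)) := by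
      intro e
      rw [hf, hzero]
      dsimp only
      constructor
      · intro h
        by_cases h1 : (e:ℕ) < n
        · rw [dif_pos h1] at h
          have := congrArg Fin.val h
          simp only [Fin.val_mk] at this
          exact Or.inl this
        · exact Or.inr (by omega)
      · intro h
        rcases h with h | h
        · rw [dif_pos (by omega)]
          exact Fin.ext (by first | omega | (simp only [Fin.val_mk]; omega) | (simp; omega))
        · rw [dif_neg (by omega)]
    have hA0 : A zero = bigset := by
      ext e
      have helt := e.isLt
      simp only [hA, Finset.mem_filter, Finset.mem_univ, true_and]
      rw [hfe e, hbigset]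
      simp only [Finset.mem_insert, Finset.mem_map, Finset.mem_univ, true_and, hemb,
        Function.Embedding.coeFn_mk]
      constructor
      · rintro (h | h)
        · exact Or.inl (Fin.ext (by first | omega | (simp only [Fin.val_mk]; omega) | (simp; omega)))
        · refine Or.inr ⟨⟨(e:ℕ) - n, by omega⟩, Fin.ext ?_⟩
          dsimp only; omega
      · rintro (rfl | ⟨k, -, rfl⟩)
        · exact Or.inl (by simp only [Fin.val_mk])
        · have := k.isLt
          exact Or.inr (by first | omega | (simp only [Fin.val_mk]; omega) | (simp; omega))
    have hbignotmem : (⟨0, by omega⟩ : Fin (2*n-1)) ∉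
        (Finset.univ : Finset (Fin (n-1))).map emb := by
      simp only [Finset.mem_map, Function.Embedding.coeFn_mk, hemb]
      rintro ⟨k, -, hk⟩
      have := congrArg Fin.val hk
      simp at this
      omega
    have hwbig : w (⟨0, by omega⟩ : Fin (2*n-1)) = 1 := by
      rw [hw]; simp
    have hwemb : ∀ k : Fin (n-1), w (emb k) = t := by
      intro k
      have hk := k.isLt
      rw [hw, hemb]
      simp only [Function.Embedding.coeFn_mk]
      rw [if_neg (by first | omega | (simp only [Fin.val_mk]; omega) | (simp; omega)), if_neg (by first | omega | (simp only [Fin.val_mk]; omega) | (simp; omega))]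
    have hcA0 : ∀ i, c i (A zero) = 1 + α * s := by
      intro i
      rw [hA0, hc]
      dsimp only
      rw [hbigset, Finset.sum_insert hbignotmem, Finset.sum_map, hwbig]
      rw [Finset.sum_congr rfl (fun k _ => hwemb k), Finset.sum_const,
        Finset.card_univ, Fintype.card_fin, nsmul_eq_mul,
        Nat.cast_sub (by omega : 1 ≤ n), Nat.cast_one, hnt]
    have hcAj : ∀ i (j : Fin n), (j:ℕ) ≠ 0 → c i (A j) = s := by
      intro i j hj
      have hjlt := j.isLt
      rw [hAj j hj, hc]
      dsimp only
      rw [Finset.sum_singleton, hw]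
      dsimp only
      rw [if_neg (by first | omega | (simp only [Fin.val_mk]; omega) | (simp; omega)), if_pos (by first | omega | (simp only [Fin.val_mk]; omega) | (simp; omega))]
    -- EF1
    have hEF1 : IsEF1 α c A := by
      intro i j hij
      right
      by_cases hi : (i:ℕ) = 0
      · have hi' : i = zero := Fin.ext hi
        have hjv : (j:ℕ) ≠ 0 := by
          intro h0
          apply hij
          rw [hi', hzero]
          exact (Fin.ext (by first | omega | (simp only [Fin.val_mk]; omega) | (simp; omega))).symm
        refine ⟨⟨0, by omega⟩, ?_, ?_⟩
        · rw [hi', hA0, hbigset]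
          exact Finset.mem_insert_self _ _
        · have hsub : {(⟨0, by omega⟩ : Fin (2*n-1))} ⊆ A zero := by
            rw [hA0, hbigset]
            exact Finset.singleton_subset_iff.mpr (Finset.mem_insert_self _ _)
          have hval : c i (A i \ {(⟨0, by omega⟩ : Fin (2*n-1))}) = α * s := by
            rw [hi']
            show (∑ e ∈ A zero \ _, w e) = α * s
            rw [Finset.sum_sdiff_eq_sub hsub, Finset.sum_singleton, hwbig]
            have := hcA0 i
            rw [hc] at this
            dsimp only at this
            rw [this]
            ring
          rw [hval, hcAj i j hjv]
      · refine ⟨⟨(i:ℕ), by have := i.isLt; omega⟩, ?_, ?_⟩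
        · rw [hAj i hi]
          exact Finset.mem_singleton_self _
        · rw [hAj i hi, Finset.sdiff_self]
          have h0 : c i ∅ = 0 := Finset.sum_empty
          rw [h0]
          exact mul_nonneg (by linarith) (Finset.sum_nonneg fun e _ => hw0 e)
    -- the MMS partition
    set g : Fin (2*n-1) → Fin n :=
      fun e => if h : (e:ℕ) < n then ⟨(e:ℕ), h⟩
        else ⟨(e:ℕ) - (n-1), by have := e.isLt; omega⟩ with hg
    set T : Fin n → Finset (Fin (2*n-1)) :=
      fun i => Finset.univ.filter (fun e => g e = i) with hT
    have hTpart : IsPartitionOf T Finset.univ := isAllocation_fiber g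
    have hT0 : T zero = {(⟨0, by omega⟩ : Fin (2*n-1))} := by
      ext e
      have helt := e.isLt
      simp only [hT, hg, Finset.mem_filter, Finset.mem_univ, true_and,
        Finset.mem_singleton]
      split_ifs with h1 <;> rw [Fin.ext_iff, Fin.ext_iff] <;> simp [hzero] <;> omega
    have hTj : ∀ j : Fin n, (j:ℕ) ≠ 0 →
        T j = {(⟨(j:ℕ), by omega⟩ : Fin (2*n-1)),
               (⟨n - 1 + (j:ℕ), by have := j.isLt; omega⟩ : Fin (2*n-1))} := by
      intro j hj
      have hjlt := j.isLt
      ext e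
      have helt := e.isLt
      simp only [hT, hg, Finset.mem_filter, Finset.mem_univ, true_and,
        Finset.mem_insert, Finset.mem_singleton]
      split_ifs with h1 <;>
        rw [Fin.ext_iff, Fin.ext_iff, Fin.ext_iff] <;> simp <;> omega
    have hcT : ∀ i : Fin n, c zero (T i) = 1 := by
      intro i
      by_cases hi : (i:ℕ) = 0
      · have hi' : i = zero := by
          rw [hzero]; exact Fin.ext (by first | omega | (simp only [Fin.val_mk]; omega) | (simp; omega))
        rw [hi', hT0, hc]
        dsimp only
        rw [Finset.sum_singleton, hwbig]
      · have hilt := i.isLt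
        rw [hTj i hi, hc]
        dsimp only
        rw [Finset.sum_pair (Fin.ne_of_val_ne (by first | omega | (simp only [Fin.val_mk]; omega) | (simp; omega)))]
        have h1 : w (⟨(i:ℕ), by omega⟩ : Fin (2*n-1)) = s := by
          rw [hw]; dsimp only
          rw [if_neg (by first | omega | (simp only [Fin.val_mk]; omega) | (simp; omega)), if_pos (by first | omega | (simp only [Fin.val_mk]; omega) | (simp; omega))]
        have h2 : w (⟨n - 1 + (i:ℕ), by omega⟩ : Fin (2*n-1)) = t := by
          rw [hw]; dsimp only
          rw [if_neg (by first | omega | (simp only [Fin.val_mk]; omega) | (simp; omega)),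
            if_neg (by first | omega | (simp only [Fin.val_mk]; omega) | (simp; omega))]
        rw [h1, h2, hst]
    have hcuniv : c zero Finset.univ = n := by
      have hsplit := additive_sum_partition (hadd zero) halloc
      have herase : ∀ j ∈ Finset.univ.erase zero, c zero (A j) = s := by
        intro j hj
        refine hcAj zero j ?_
        intro h0
        apply (Finset.mem_erase.mp hj).1
        rw [hzero]
        exact Fin.ext (by first | omega | (simp only [Fin.val_mk]; omega) | (simp; omega))
      have h2 := Finset.add_sum_erase Finset.univ (fun j => c zero (A j))
        (Finset.mem_univ zero)
      rw [Finset.sum_congr rfl herase, Finset.sum_const,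
        Finset.card_erase_of_mem (Finset.mem_univ _), Finset.card_univ,
        Fintype.card_fin, nsmul_eq_mul, Nat.cast_sub (by omega : 1 ≤ n),
        Nat.cast_one, hcA0 zero] at h2
      rw [← hsplit, ← h2, hs]
      field_simp
      ring
    have hMMS : MMS (c zero) n Finset.univ = 1 := by
      apply le_antisymm
      · have h1 := MMS_le_of_partition (hadd zero).1 (by omega : 0 < n) hTpart
        have h2 : (⨆ i : Fin n, c zero (T i)) = 1 := by
          haveI : Nonempty (Fin n) := ⟨zero⟩
          simp only [hcT]
          exact ciSup_const
        rw [h2] at h1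
        exact h1
      · have h := avg_le_MMS (hadd zero) (by omega : 0 < n) Finset.univ
        rw [hcuniv, div_self (by positivity : (n:ℝ) ≠ 0)] at h
        exact h
    refine ⟨2*n-1, c, A, hadd, halloc, hEF1, zero, ?_⟩
    rw [hMMS, mul_one, hcA0 zero, hs]
    field_simp
    ring
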